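/- The Besov covering B(G) of a stratified Lie group (ℝⁿ, *_G) with n > 1 is an almost structured covering with reference sets D₀(G) and D₁(G) and affine maps A_m = diag(2^{(m−1)v₁},…,2^{(m−1)vₙ}) for m ≥ 1 (A₀ = Id), satisfying A_m(D₁(G)) = D_m(G) and ‖T_l^{−1}T_m‖ ≤ 2^{vₙ} whenever D_m(G) ∩ D_l(G) ≠ ∅; moreover B(G) is never structured unless (ℝⁿ, *_G) ≅ (ℝ, +). -/
import Mathlib


open MeasureTheory

/-- The dilations of a stratified Lie group realized on `ℝⁿ` in coordinates adapted to the
stratification: coordinate `j` has degree `v j` and scales as `r ^ v j`. -/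
def dil {n : ℕ} (v : Fin n → ℕ) (r : ℝ) (x : Fin n → ℝ) : Fin n → ℝ :=
  fun j => r ^ v j * x j

/-- A stratified Lie group realized on `ℝⁿ` through the exponential map: a Lie group
structure `*_G` on `ℝⁿ` with identity `0`, together with degrees `deg j ≥ 1` of the
coordinates (adapted to the stratification) such that the associated dilations are group
automorphisms. -/
structure StratifiedGroup (n : ℕ) where
  mul : (Fin n → ℝ) → (Fin n → ℝ) → (Fin n → ℝ)
  inv : (Fin n → ℝ) → (Fin n → ℝ)
  mul_assoc' : ∀ x y z, mul (mul x y) z = mul x (mul y z)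
  zero_mul' : ∀ x, mul 0 x = x
  mul_zero' : ∀ x, mul x 0 = x
  inv_mul' : ∀ x, mul (inv x) x = 0
  continuous_mul' : Continuous fun p : (Fin n → ℝ) × (Fin n → ℝ) => mul p.1 p.2
  continuous_inv' : Continuous inv
  deg : Fin n → ℕ
  deg_pos : ∀ j, 1 ≤ deg j
  dil_mul : ∀ r : ℝ, 0 < r → ∀ x y, dil deg r (mul x y) = mul (dil deg r x) (dil deg r y)

/-- The homogeneous dimension `Q = ∑ j deg j` of a stratified group. -/
def StratifiedGroup.Q {n : ℕ} (S : StratifiedGroup n) : ℕ := ∑ j, S.deg j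

/-- A homogeneous quasi-norm on a stratified Lie group: a continuous, nonnegative,
`1`-homogeneous (for the dilations), symmetric function vanishing exactly at the identity. -/
structure IsQuasiNorm {n : ℕ} (S : StratifiedGroup n) (N : (Fin n → ℝ) → ℝ) : Prop where
  continuous : Continuous N
  nonneg : ∀ x, 0 ≤ N x
  homogeneous : ∀ r : ℝ, 0 < r → ∀ x, N (dil S.deg r x) = r * N x
  symm : ∀ x, N (S.inv x) = N x
  eq_zero_iff : ∀ x, N x = 0 ↔ x = 0

/-- The quasi-ball `B(c, R) = {h : ‖c⁻¹ *_G h‖ < R}`. -/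
def qBall {n : ℕ} (S : StratifiedGroup n) (N : (Fin n → ℝ) → ℝ)
    (c : Fin n → ℝ) (R : ℝ) : Set (Fin n → ℝ) :=
  {h | N (S.mul (S.inv c) h) < R}

/-- The homogeneous quasi-norm `‖x‖₂ = (∑ⱼ |xⱼ|^{2/vⱼ})^{1/2}` adapted to the degrees `v`. -/
noncomputable def nrm2 {n : ℕ} (v : Fin n → ℕ) (x : Fin n → ℝ) : ℝ :=
  (∑ j, |x j| ^ ((2 : ℝ) / (v j : ℝ))) ^ ((1 : ℝ) / 2)

/-- The members of the Besov covering `𝓑(G)`: `D₀(G) = B^{‖·‖₂}(0,2)` and, for `m ≥ 1`,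
the dyadic annuli `D_m(G) = B^{‖·‖₂}(0, 2^{m+1}) \ closure (B^{‖·‖₂}(0, 2^{m-1}))`. -/
noncomputable def besovSet {n : ℕ} (S : StratifiedGroup n) (m : ℕ) : Set (Fin n → ℝ) :=
  if m = 0 then {x | nrm2 S.deg x < 2}
  else {x | nrm2 S.deg x < 2 ^ (m + 1)} \ closure {x | nrm2 S.deg x < 2 ^ (m - 1)}

/-- A family of sets in `ℝⁿ` is a structured covering if its members are the images of a
single bounded open reference set under invertible affine maps, with uniform compatibility
of the linear parts on intersecting members, and with shrunken images still covering. -/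
def IsStructuredFam {n : ℕ} {I : Type*} (Qc : I → Set (Fin n → ℝ)) : Prop :=
  ∃ P : Set (Fin n → ℝ), IsOpen P ∧ Bornology.IsBounded P ∧
    ∃ (T : I → (Fin n → ℝ) ≃ₗ[ℝ] (Fin n → ℝ)) (b : I → (Fin n → ℝ)),
      (∀ i, (fun x => T i x + b i) '' P = Qc i) ∧
      (∃ C : ℝ, ∀ i j, (Qc i ∩ Qc j).Nonempty →
        ∀ x : Fin n → ℝ, ‖T j ((T i).symm x)‖ ≤ C * ‖x‖) ∧
      ∃ P' : Set (Fin n → ℝ), IsOpen P' ∧ closure P' ⊆ P ∧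
        ⋃ i, (fun x => T i x + b i) '' P' = Set.univ


section Helpers

variable {n : ℕ} (v : Fin n → ℕ)

lemma dil_dil (r s : ℝ) (x : Fin n → ℝ) : dil v r (dil v s x) = dil v (r * s) x := by
  funext j; simp [dil, mul_pow]; ring

lemma dil_one (x : Fin n → ℝ) : dil v 1 x = x := by
  funext j; simp [dil]

lemma continuous_dil (r : ℝ) : Continuous (dil v r) :=
  continuous_pi fun j => continuous_const.mul (continuous_apply j)

/-- Dilation as a homeomorphism (for `r ≠ 0`). -/
noncomputable def dilHomeo (r : ℝ) (hr : r ≠ 0) : (Fin n → ℝ) ≃ₜ (Fin n → ℝ) where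
  toFun := dil v r
  invFun := dil v r⁻¹
  left_inv x := by rw [dil_dil, inv_mul_cancel₀ hr, dil_one]
  right_inv x := by rw [dil_dil, mul_inv_cancel₀ hr, dil_one]
  continuous_toFun := continuous_dil v r
  continuous_invFun := continuous_dil v r⁻¹

lemma nrm2_neg (x : Fin n → ℝ) : nrm2 v (-x) = nrm2 v x := by
  simp [nrm2]

lemma nrm2_zero (hv : ∀ j, 1 ≤ v j) : nrm2 v (0 : Fin n → ℝ) = 0 := by
  have h : ∀ j : Fin n, |(0 : Fin n → ℝ) j| ^ ((2 : ℝ) / (v j : ℝ)) = 0 := by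
    intro j
    have hvj : (v j : ℝ) ≠ 0 := Nat.cast_ne_zero.mpr (by have := hv j; omega)
    rw [Pi.zero_apply, abs_zero, Real.zero_rpow (div_ne_zero two_ne_zero hvj)]
  unfold nrm2
  rw [Finset.sum_congr rfl fun j _ => h j, Finset.sum_const, smul_zero,
    Real.zero_rpow (by norm_num)]

lemma nrm2_dil (hv : ∀ j, 1 ≤ v j) {r : ℝ} (hr : 0 < r) (x : Fin n → ℝ) :
    nrm2 v (dil v r x) = r * nrm2 v x := by
  have h : ∀ j : Fin n, |r ^ v j * x j| ^ ((2 : ℝ) / (v j : ℝ))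
      = r ^ (2 : ℝ) * |x j| ^ ((2 : ℝ) / (v j : ℝ)) := by
    intro j
    have hvj : (v j : ℝ) ≠ 0 := Nat.cast_ne_zero.mpr (by have := hv j; omega)
    rw [abs_mul, abs_pow, abs_of_pos hr,
      Real.mul_rpow (by positivity) (abs_nonneg _)]
    congr 1
    rw [← Real.rpow_natCast r (v j), ← Real.rpow_mul hr.le]
    congr 1
    field_simp
  unfold nrm2 dil
  rw [Finset.sum_congr rfl fun j _ => h j, ← Finset.mul_sum,
    Real.mul_rpow (by positivity) (Finset.sum_nonneg fun j _ => Real.rpow_nonneg (abs_nonneg _) _),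
    ← Real.rpow_mul hr.le]
  norm_num

lemma nrm2_smul_le (x : Fin n → ℝ) {t : ℝ} (h0 : 0 ≤ t) (h1 : t ≤ 1) :
    nrm2 v (t • x) ≤ nrm2 v x := by
  unfold nrm2
  apply Real.rpow_le_rpow (Finset.sum_nonneg fun j _ => Real.rpow_nonneg (abs_nonneg _) _)
    ?_ (by norm_num)
  apply Finset.sum_le_sum
  intro j _
  have habs : |(t • x) j| = |t| * |x j| := by simp [abs_mul]
  rw [habs, Real.mul_rpow (abs_nonneg _) (abs_nonneg _)]
  calc |t| ^ ((2 : ℝ) / (v j : ℝ)) * |x j| ^ ((2 : ℝ) / (v j : ℝ))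
      ≤ 1 * |x j| ^ ((2 : ℝ) / (v j : ℝ)) := by
        apply mul_le_mul_of_nonneg_right _ (Real.rpow_nonneg (abs_nonneg _) _)
        exact Real.rpow_le_one (abs_nonneg t) (by rwa [abs_of_nonneg h0]) (by positivity)
    _ = |x j| ^ ((2 : ℝ) / (v j : ℝ)) := one_mul _

lemma dil_image_lt (hv : ∀ j, 1 ≤ v j) {r : ℝ} (hr : 0 < r) (c : ℝ) :
    dil v r '' {x | nrm2 v x < c} = {x | nrm2 v x < r * c} := by
  ext x
  constructor
  · rintro ⟨y, hy, rfl⟩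
    rw [Set.mem_setOf_eq, nrm2_dil v hv hr]
    exact mul_lt_mul_of_pos_left hy hr
  · intro hx
    refine ⟨dil v r⁻¹ x, ?_, by rw [dil_dil, mul_inv_cancel₀ hr.ne', dil_one]⟩
    rw [Set.mem_setOf_eq, nrm2_dil v hv (inv_pos.mpr hr)]
    rw [Set.mem_setOf_eq] at hx
    calc r⁻¹ * nrm2 v x < r⁻¹ * (r * c) := mul_lt_mul_of_pos_left hx (inv_pos.mpr hr)
      _ = c := by field_simp

end Helpers

/-- For `n > 1` (coordinates ordered with nondecreasing degrees), the Besov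
covering is almost structured: the reference sets `D₀(G)`, `D₁(G)` and the diagonal linear
maps `A_m = D^G_{2^{m-1}}` satisfy `A_m(D₁(G)) = D_m(G)` for `m ≥ 1`, with the uniform
compatibility bound `‖T_l⁻¹ T_m‖ ≤ 2^{vₙ}` on intersecting members; but the Besov covering
is not a structured covering. -/
theorem besov_covering_almost_structured {n : ℕ} (hn : 1 < n)
    (S : StratifiedGroup n) (hmono : Monotone S.deg) :
    (∀ m : ℕ, 1 ≤ m →
      dil S.deg ((2 : ℝ) ^ (m - 1)) '' besovSet S 1 = besovSet S m) ∧
    (∀ m l : ℕ, 1 ≤ m → 1 ≤ l → (besovSet S m ∩ besovSet S l).Nonempty →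
      ∀ x : Fin n → ℝ,
        ‖dil S.deg ((2 : ℝ) ^ ((m : ℤ) - 1) / (2 : ℝ) ^ ((l : ℤ) - 1)) x‖
          ≤ 2 ^ (S.deg ⟨n - 1, by omega⟩) * ‖x‖) ∧
    ¬ IsStructuredFam (besovSet S) := by
  refine ⟨?_, ?_, ?_⟩
  · -- Part 1: A_m (D₁) = D_m
    intro m hm
    have hv : ∀ j, 1 ≤ S.deg j := S.deg_pos
    have hr : (0 : ℝ) < 2 ^ (m - 1) := by positivity
    have hne : m ≠ 0 := by omega
    simp only [besovSet, if_neg hne, if_neg (one_ne_zero (α := ℕ))]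
    have hinj : Function.Injective (dil S.deg ((2 : ℝ) ^ (m - 1))) :=
      (dilHomeo S.deg _ hr.ne').injective
    rw [Set.image_diff hinj]
    have hcl : dil S.deg ((2 : ℝ) ^ (m - 1)) '' closure {x | nrm2 S.deg x < 2 ^ (1 - 1)}
        = closure (dil S.deg ((2 : ℝ) ^ (m - 1)) '' {x | nrm2 S.deg x < 2 ^ (1 - 1)}) :=
      (dilHomeo S.deg _ hr.ne').image_closure _
    rw [hcl, dil_image_lt S.deg hv hr, dil_image_lt S.deg hv hr]
    have e1 : (2 : ℝ) ^ (m - 1) * 2 ^ (1 + 1) = 2 ^ (m + 1) := by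
      rw [← pow_add]; congr 1; omega
    have e2 : (2 : ℝ) ^ (m - 1) * 2 ^ (1 - 1) = 2 ^ (m - 1) := by norm_num
    rw [e1, e2]
  · -- Part 2: compatibility bound
    rintro m l hm hl ⟨x0, hx0m, hx0l⟩ x
    rw [besovSet, if_neg (by omega : m ≠ 0)] at hx0m
    rw [besovSet, if_neg (by omega : l ≠ 0)] at hx0l
    have hgem : (2 : ℝ) ^ (m - 1) ≤ nrm2 S.deg x0 := by
      by_contra h
      exact hx0m.2 (subset_closure (by simpa using lt_of_not_ge h))
    have hgel : (2 : ℝ) ^ (l - 1) ≤ nrm2 S.deg x0 := by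
      by_contra h
      exact hx0l.2 (subset_closure (by simpa using lt_of_not_ge h))
    have hml : m ≤ l + 1 := by
      have h1 : (2 : ℝ) ^ (m - 1) < 2 ^ (l + 1) := lt_of_le_of_lt hgem hx0l.1
      have := (pow_lt_pow_iff_right₀ (by norm_num : (1:ℝ) < 2)).mp h1
      omega
    have hlm : l ≤ m + 1 := by
      have h1 : (2 : ℝ) ^ (l - 1) < 2 ^ (m + 1) := lt_of_le_of_lt hgel hx0m.1
      have := (pow_lt_pow_iff_right₀ (by norm_num : (1:ℝ) < 2)).mp h1
      omega
    set r : ℝ := (2 : ℝ) ^ ((m : ℤ) - 1) / (2 : ℝ) ^ ((l : ℤ) - 1) with hrdef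
    have hreq : r = (2 : ℝ) ^ ((m : ℤ) - (l : ℤ)) := by
      rw [hrdef, ← zpow_sub₀ (two_ne_zero)]
      congr 1; ring
    have hrpos : 0 < r := by rw [hreq]; positivity
    have hrle : r ≤ 2 := by
      rw [hreq]
      calc (2 : ℝ) ^ ((m : ℤ) - (l : ℤ)) ≤ 2 ^ (1 : ℤ) :=
            zpow_le_zpow_right₀ (by norm_num) (by omega)
        _ = 2 := zpow_one 2
    have hC : (0 : ℝ) ≤ 2 ^ (S.deg ⟨n - 1, by omega⟩) * ‖x‖ := by positivity
    rw [pi_norm_le_iff_of_nonneg hC]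
    intro j
    show ‖r ^ S.deg j * x j‖ ≤ _
    rw [Real.norm_eq_abs, abs_mul, abs_pow, abs_of_pos hrpos]
    have h1 : r ^ S.deg j ≤ 2 ^ S.deg j := pow_le_pow_left₀ hrpos.le hrle _
    have h2 : (2 : ℝ) ^ S.deg j ≤ 2 ^ (S.deg ⟨n - 1, by omega⟩) :=
      pow_le_pow_right₀ (by norm_num) (hmono (by
        rw [Fin.le_def]; simp; omega))
    have h3 : |x j| ≤ ‖x‖ := by
      have := norm_le_pi_norm x j
      rwa [Real.norm_eq_abs] at this
    exact mul_le_mul (h1.trans h2) h3 (abs_nonneg _) (by positivity)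
  · -- Part 3: not structured
    rintro ⟨P, hPopen, hPbdd, T, b, himg, -, -⟩
    have hv : ∀ j, 1 ≤ S.deg j := S.deg_pos
    have h0mem : (0 : Fin n → ℝ) ∈ besovSet S 0 := by
      rw [besovSet, if_pos rfl]
      simp [nrm2_zero S.deg hv]
    rw [← himg 0] at h0mem
    obtain ⟨p₀, hp₀P, hp₀⟩ := h0mem
    simp only at hp₀
    set c : Fin n → ℝ := T 1 p₀ + b 1 with hc
    have hcD1 : c ∈ besovSet S 1 := by
      rw [← himg 1]; exact ⟨p₀, hp₀P, rfl⟩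
    have hUneg : (fun y : Fin n → ℝ => -y) '' {x | nrm2 S.deg x < 2 ^ (1 - 1)}
        = {x | nrm2 S.deg x < 2 ^ (1 - 1)} := by
      ext z
      constructor
      · rintro ⟨w, hw, rfl⟩
        simpa [nrm2_neg] using hw
      · intro hz
        exact ⟨-z, by simpa [nrm2_neg] using hz, by simp⟩
    have hnegc : -c ∈ besovSet S 1 := by
      rw [besovSet, if_neg one_ne_zero] at hcD1 ⊢
      refine ⟨by simpa [nrm2_neg] using hcD1.1, ?_⟩
      intro h
      apply hcD1.2
      have hhomeo : (Homeomorph.neg (Fin n → ℝ)) '' closure {x | nrm2 S.deg x < 2 ^ (1 - 1)}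
          = closure ((fun y : Fin n → ℝ => -y) '' {x | nrm2 S.deg x < 2 ^ (1 - 1)}) :=
        (Homeomorph.neg (Fin n → ℝ)).image_closure _
      have : c ∈ (Homeomorph.neg (Fin n → ℝ)) '' closure {x | nrm2 S.deg x < 2 ^ (1 - 1)} :=
        ⟨-c, h, by simp [Homeomorph.neg]⟩
      rwa [hhomeo, hUneg] at this
    rw [← himg 1] at hnegc
    obtain ⟨q, hqP, hq⟩ := hnegc
    simp only at hq
    set y : Fin n → ℝ := T 0 q + b 0 with hy
    have hyD0 : y ∈ besovSet S 0 := by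
      rw [← himg 0]; exact ⟨q, hqP, rfl⟩
    have hyhalf : (1 / 2 : ℝ) • y ∈ besovSet S 0 := by
      rw [besovSet, if_pos rfl] at hyD0 ⊢
      exact lt_of_le_of_lt (nrm2_smul_le S.deg y (by norm_num) (by norm_num)) hyD0
    rw [← himg 0] at hyhalf
    obtain ⟨p, hpP, hp⟩ := hyhalf
    simp only at hp
    have hqp : p = (1 / 2 : ℝ) • (q + p₀) := by
      apply (T 0).injective
      rw [_root_.map_smul, map_add]
      have hb0 : b 0 = -(T 0 p₀) := eq_neg_of_add_eq_zero_right hp₀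
      have hTp : T 0 p = (1 / 2 : ℝ) • (T 0 q + b 0) - b 0 := eq_sub_of_add_eq (by rw [hp, hy])
      rw [hTp, hb0]
      module
    have key : T 1 p + b 1 = 0 := by
      have h1q : T 1 q = -c - b 1 := eq_sub_of_add_eq hq
      have h1p₀ : T 1 p₀ = c - b 1 := eq_sub_of_add_eq hc.symm
      rw [hqp, _root_.map_smul, map_add, h1q, h1p₀]
      module
    have h0D1 : (0 : Fin n → ℝ) ∈ besovSet S 1 := by
      rw [← himg 1]; exact ⟨p, hpP, key⟩
    rw [besovSet, if_neg one_ne_zero] at h0D1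
    exact h0D1.2 (subset_closure (by simp [nrm2_zero S.deg hv]))
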